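/- Let G be a group, F a finite subgroup of G, and let Y_n ⊆ Y_{n−1} ⊆ ⋯ ⊆ Y_0 ⊆ X_0 ⊆ X_1 ⊆ ⋯ ⊆ X_n be subgroups of G such that Y_i^F ⊆ Y_i for all 0 ≤ i ≤ n and Y_i^{X_i} ⊆ Y_{i−1} for all 1 ≤ i ≤ n. Let I ⊆ G and for 1 ≤ i ≤ n set D_i = X_i ∩ (I ⋄ (X_{i−1} \ F·Y_{i−1})). Let a_i ∈ D_i for i = 1, …, n and let c = a_n a_{n−1} ⋯ a_1. Fix 1 ≤ i ≤ n. Then for any a′_1, …, a′_n with a′_j ∈ D_j for all j, a′_n a′_{n−1} ⋯ a′_1 = c, and a′_j·Y_{j−1} = a_j·Y_{j−1} for all j > i, one has a′_i·(F·Y_{i−1}) = a_i·(F·Y_{i−1}). -/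

import Mathlib

open Pointwise

/-- `X ⋄ Y = {g ∈ X : gY ∩ X = ∅}`. -/
def diamond {G : Type*} [Group G] (X Y : Set G) : Set G :=
  {g ∈ X | g • Y ∩ X = ∅}

/-- The descending product `a_k * a_{k-1} * ⋯ * a_1` (empty product for `k = 0`). -/
def prodDesc {G : Type*} [Group G] (a : ℕ → G) : ℕ → G
  | 0 => 1
  | k + 1 => a (k + 1) * prodDesc a k

/-- If `F` normalizes `Y`, then `F * Y` is a subgroup. -/
def FYsub {G : Type*} [Group G] (F Y : Subgroup G)
    (h : ∀ y ∈ Y, ∀ f ∈ F, f⁻¹ * y * f ∈ Y) : Subgroup G where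
  carrier := (F : Set G) * (Y : Set G)
  one_mem' := ⟨1, F.one_mem, 1, Y.one_mem, by simp⟩
  mul_mem' := by
    rintro x z ⟨f1, hf1, y1, hy1, rfl⟩ ⟨f2, hf2, y2, hy2, rfl⟩
    exact ⟨f1 * f2, F.mul_mem hf1 hf2, (f2⁻¹ * y1 * f2) * y2,
      Y.mul_mem (h y1 hy1 f2 hf2) hy2, by group⟩
  inv_mem' := by
    rintro x ⟨f, hf, y, hy, rfl⟩
    refine ⟨f⁻¹, F.inv_mem hf, f * y⁻¹ * f⁻¹, ?_, by group⟩
    have := h y⁻¹ (Y.inv_mem hy) f⁻¹ (F.inv_mem hf)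
    simpa using this

theorem claim2 {G : Type*} [Group G] (n : ℕ) (hn : 1 ≤ n)
    (F : Subgroup G) (hF : (F : Set G).Finite)
    (X Y : ℕ → Subgroup G)
    (hYdec : ∀ i, i < n → Y (i + 1) ≤ Y i)
    (hXinc : ∀ i, i < n → X i ≤ X (i + 1))
    (hYX : Y 0 ≤ X 0)
    (hYF : ∀ i, i ≤ n → ∀ y ∈ Y i, ∀ f ∈ F, f⁻¹ * y * f ∈ Y i)
    (hconj : ∀ i, 1 ≤ i → i ≤ n → ∀ y ∈ Y i, ∀ x ∈ X i, x⁻¹ * y * x ∈ Y (i - 1))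
    (I : Set G) (a : ℕ → G)
    (ha : ∀ j, 1 ≤ j → j ≤ n →
      a j ∈ (X j : Set G) ∩
        diamond I ((X (j - 1) : Set G) \ ((F : Set G) * (Y (j - 1) : Set G))))
    (c : G) (hc : c = prodDesc a n)
    (i : ℕ) (hi1 : 1 ≤ i) (hin : i ≤ n) :
    ∀ a' : ℕ → G,
      (∀ j, 1 ≤ j → j ≤ n →
        a' j ∈ (X j : Set G) ∩
          diamond I ((X (j - 1) : Set G) \ ((F : Set G) * (Y (j - 1) : Set G)))) →
      prodDesc a' n = c →
      (∀ j, i < j → j ≤ n → a' j • (Y (j - 1) : Set G) = a j • (Y (j - 1) : Set G)) →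
      a' i • ((F : Set G) * (Y (i - 1) : Set G)) =
        a i • ((F : Set G) * (Y (i - 1) : Set G)) := by
  intro a' ha' hc' hcoset
  -- monotonicity
  have hXmono : ∀ j k, j ≤ k → k ≤ n → X j ≤ X k := by
    intro j k hjk hkn
    induction k with
    | zero => simpa [Nat.le_zero.mp hjk] using le_refl (X 0)
    | succ m ih =>
      rcases Nat.lt_or_ge j (m+1) with h | h
      · exact le_trans (ih (Nat.lt_succ_iff.mp h) (le_trans (Nat.le_succ m) hkn))
          (hXinc m (Nat.lt_of_lt_of_le (Nat.lt_succ_self m) hkn))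
      · have : j = m + 1 := le_antisymm hjk h
        simp [this]
  have hYmono : ∀ j k, j ≤ k → k ≤ n → Y k ≤ Y j := by
    intro j k hjk hkn
    induction k with
    | zero => simpa [Nat.le_zero.mp hjk] using le_refl (Y 0)
    | succ m ih =>
      rcases Nat.lt_or_ge j (m+1) with h | h
      · exact le_trans (hYdec m (Nat.lt_of_lt_of_le (Nat.lt_succ_self m) hkn))
          (ih (Nat.lt_succ_iff.mp h) (le_trans (Nat.le_succ m) hkn))
      · have : j = m + 1 := le_antisymm hjk h
        simp [this]
  have hYXm : ∀ j, j ≤ n → Y j ≤ X j := fun j hj =>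
    le_trans (hYmono 0 j (Nat.zero_le j) hj)
      (le_trans hYX (hXmono 0 j (Nat.zero_le j) hj))
  -- products lie in X
  have hprodmem : ∀ (b : ℕ → G),
      (∀ j, 1 ≤ j → j ≤ n → b j ∈ X j) → ∀ m, m ≤ n → prodDesc b m ∈ X m := by
    intro b hb m hm
    induction m with
    | zero => exact (X 0).one_mem
    | succ k ih =>
      exact (X (k+1)).mul_mem (hb (k+1) (Nat.succ_le_succ (Nat.zero_le k)) hm)
        (hXmono k (k+1) (Nat.le_succ k) hm (ih (le_trans (Nat.le_succ k) hm)))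
  -- the key pushing induction
  have key : ∀ d, d ≤ n - i → ∃ z ∈ Y (n - d),
      prodDesc a' n * (prodDesc a' (n - d))⁻¹ =
        prodDesc a n * (prodDesc a (n - d))⁻¹ * z := by
    intro d hd
    induction d with
    | zero => exact ⟨1, (Y n).one_mem, by simp⟩
    | succ e ih =>
      obtain ⟨z, hz, hzeq⟩ := ih (le_trans (Nat.le_succ e) hd)
      set m := n - e with hm
      have him : i + 1 ≤ m := by omega
      have hm1 : 1 ≤ m := by omega
      have hmn : m ≤ n := by omega
      have hmm : n - (e + 1) = m - 1 := by omega
      have hms : m - 1 + 1 = m := by omega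
      -- a' m = a m * y with y ∈ Y (m-1)
      have hy : (a m)⁻¹ * a' m ∈ Y (m - 1) := by
        have := hcoset m (by omega) hmn
        exact (leftCoset_eq_iff (Y (m - 1))).mp this.symm
      -- conjugate of z
      have hz' : (a m)⁻¹ * z * a m ∈ Y (m - 1) :=
        hconj m hm1 hmn z hz (a m) (ha m hm1 hmn).1
      refine ⟨((a m)⁻¹ * z * a m) * ((a m)⁻¹ * a' m),
        (Y (m - 1)).mul_mem hz' hy, ?_⟩
      rw [hmm]
      have e1 : prodDesc a' m = a' m * prodDesc a' (m - 1) := by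
        conv_lhs => rw [← hms]
        rw [show prodDesc a' (m-1+1) = a' (m-1+1) * prodDesc a' (m-1) from rfl, hms]
      have e2 : prodDesc a m = a m * prodDesc a (m - 1) := by
        conv_lhs => rw [← hms]
        rw [show prodDesc a (m-1+1) = a (m-1+1) * prodDesc a (m-1) from rfl, hms]
      calc prodDesc a' n * (prodDesc a' (m - 1))⁻¹
          = (prodDesc a' n * (prodDesc a' m)⁻¹) * a' m := by rw [e1]; group
        _ = (prodDesc a n * (prodDesc a m)⁻¹ * z) * a' m := by rw [hzeq]
        _ = prodDesc a n * (prodDesc a (m-1))⁻¹ *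
              (((a m)⁻¹ * z * a m) * ((a m)⁻¹ * a' m)) := by rw [e2]; group
  -- apply at d = n - i
  obtain ⟨z, hz, hzeq⟩ := key (n - i) le_rfl
  rw [Nat.sub_sub_self hin] at hz hzeq
  rw [hc', ← hc] at hzeq
  -- hzeq : c * (prodDesc a' i)⁻¹ = c * (prodDesc a i)⁻¹ * z
  have his : i - 1 + 1 = i := by omega
  have e1 : prodDesc a' i = a' i * prodDesc a' (i - 1) := by
    conv_lhs => rw [← his]
    rw [show prodDesc a' (i-1+1) = a' (i-1+1) * prodDesc a' (i-1) from rfl, his]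
  have e2 : prodDesc a i = a i * prodDesc a (i - 1) := by
    conv_lhs => rw [← his]
    rw [show prodDesc a (i-1+1) = a (i-1+1) * prodDesc a (i-1) from rfl, his]
  -- g = a_i⁻¹ * a'_i
  have hgval : (a i)⁻¹ * a' i =
      ((a i)⁻¹ * z⁻¹ * a i) * (prodDesc a (i-1) * (prodDesc a' (i-1))⁻¹) := by
    have h3 : prodDesc a' i = z⁻¹ * prodDesc a i := by
      have := hzeq
      have h4 : (prodDesc a' i)⁻¹ = (prodDesc a i)⁻¹ * z := by
        calc (prodDesc a' i)⁻¹ = c⁻¹ * (c * (prodDesc a' i)⁻¹) := by group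
          _ = c⁻¹ * (c * (prodDesc a i)⁻¹ * z) := by rw [this]
          _ = (prodDesc a i)⁻¹ * z := by group
      calc prodDesc a' i = ((prodDesc a' i)⁻¹)⁻¹ := by group
        _ = ((prodDesc a i)⁻¹ * z)⁻¹ := by rw [h4]
        _ = z⁻¹ * prodDesc a i := by group
    rw [e1, e2] at h3
    -- h3 : a' i * P' = z⁻¹ * (a i * P)
    calc (a i)⁻¹ * a' i
        = (a i)⁻¹ * (a' i * prodDesc a' (i-1)) * (prodDesc a' (i-1))⁻¹ := by group
      _ = (a i)⁻¹ * (z⁻¹ * (a i * prodDesc a (i-1))) * (prodDesc a' (i-1))⁻¹ := by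
          rw [h3]
      _ = ((a i)⁻¹ * z⁻¹ * a i) * (prodDesc a (i-1) * (prodDesc a' (i-1))⁻¹) := by
          group
  have hi1n : i - 1 ≤ n := by omega
  have hginX : (a i)⁻¹ * a' i ∈ X (i - 1) := by
    rw [hgval]
    have h5 : (a i)⁻¹ * z⁻¹ * a i ∈ Y (i - 1) :=
      hconj i hi1 hin z⁻¹ ((Y i).inv_mem hz) (a i) (ha i hi1 hin).1
    exact (X (i-1)).mul_mem (hYXm (i-1) hi1n h5)
      ((X (i-1)).mul_mem
        (hprodmem a (fun j h1 h2 => (ha j h1 h2).1) (i-1) hi1n)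
        ((X (i-1)).inv_mem
          (hprodmem a' (fun j h1 h2 => (ha' j h1 h2).1) (i-1) hi1n)))
  -- diamond argument
  have hdia := (ha i hi1 hin).2
  have hdia' := (ha' i hi1 hin).2
  have haI : a i ∈ I := hdia.1
  have ha'I : a' i ∈ I := hdia'.1
  have hempty : a i • ((X (i-1) : Set G) \ ((F : Set G) * (Y (i-1) : Set G))) ∩ I = ∅ :=
    hdia.2
  have hgFY : (a i)⁻¹ * a' i ∈ (F : Set G) * (Y (i-1) : Set G) := by
    by_contra hnot
    have hmem : a' i ∈ a i • ((X (i-1) : Set G) \ ((F : Set G) * (Y (i-1) : Set G))) ∩ I := by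
      refine ⟨⟨(a i)⁻¹ * a' i, ⟨hginX, hnot⟩, by simp⟩, ha'I⟩
    rw [hempty] at hmem
    exact hmem
  -- conclude via coset lemma for the subgroup F * Y (i-1)
  have hnorm : ∀ y ∈ Y (i-1), ∀ f ∈ F, f⁻¹ * y * f ∈ Y (i-1) := hYF (i-1) hi1n
  show a' i • ((FYsub F (Y (i-1)) hnorm : Subgroup G) : Set G) =
      a i • ((FYsub F (Y (i-1)) hnorm : Subgroup G) : Set G)
  rw [leftCoset_eq_iff]
  exact (FYsub F (Y (i-1)) hnorm).inv_mem_iff.mp (by rw [mul_inv_rev, inv_inv]; exact hgFY)
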